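/- arXiv:2204.07692 — 3 statements merged into one kernel-verified Lean document; each statement's English description precedes it below -/
import Mathlib

section
/- Let L be a real number with L > 0 and define f_L(z) := 2·z^{L−1}·exp(−z²/2) / (Γ(L/2)·2^{L/2}) for z > 0. Then (1/12)·(∫₀^∞ f_L(z)^{1/3} dz)³ = 3^{L/2} · Γ((L+2)/6)³ / (8·Γ(L/2)). (Equation (A.5) in the proof of Lemma 2: the high-resolution (Panter–Dite) constant of the Lloyd–Max gain quantizer for the chi density equals χ_L/4 with χ_L = 3^{L/2}Γ³((L+2)/6)/(2Γ(L/2)).) -/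
open Real

theorem stmt_8 (L : ℝ) (hL : 0 < L)
    (f : ℝ → ℝ)
    (hf : ∀ z, 0 < z →
      f z = 2 * z ^ (L - 1) * Real.exp (-z ^ 2 / 2) / (Real.Gamma (L / 2) * (2 : ℝ) ^ (L / 2))) :
    (1 / 12) * (∫ z in Set.Ioi (0 : ℝ), (f z) ^ ((1 : ℝ) / 3)) ^ 3
      = (3 : ℝ) ^ (L / 2) * Real.Gamma ((L + 2) / 6) ^ 3 / (8 * Real.Gamma (L / 2)) := by
  set c : ℝ := Real.Gamma (L / 2) * (2 : ℝ) ^ (L / 2) with hc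
  have hΓ : 0 < Real.Gamma (L / 2) := Real.Gamma_pos_of_pos (by linarith)
  have hcpos : 0 < c := by positivity
  have hq : (-1 : ℝ) < (L - 1) / 3 := by linarith
  have key : ∫ z in Set.Ioi (0 : ℝ), (f z) ^ ((1 : ℝ) / 3)
      = (2 / c) ^ ((1 : ℝ) / 3) *
        (((1 : ℝ)/6) ^ (-((L - 1) / 3 + 1) / 2) * (1 / 2) * Real.Gamma (((L - 1) / 3 + 1) / 2)) := by
    rw [← integral_rpow_mul_exp_neg_mul_rpow (two_pos) hq (by norm_num : (0:ℝ) < 1/6),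
      ← MeasureTheory.integral_const_mul]
    refine MeasureTheory.setIntegral_congr_fun measurableSet_Ioi (fun z hz => ?_)
    have hz : 0 < z := hz
    have h2 : z ^ ((2 : ℝ)) = z ^ (2 : ℕ) := by
      rw [show ((2:ℝ)) = ((2:ℕ):ℝ) by norm_num, Real.rpow_natCast]
    rw [hf z hz, h2]
    have h1 : 2 * z ^ (L - 1) * Real.exp (-z ^ 2 / 2) / c
        = (2 / c) * (z ^ (L - 1) * Real.exp (-z ^ 2 / 2)) := by ring
    rw [h1, Real.mul_rpow (by positivity) (by positivity),
      Real.mul_rpow (by positivity) (by positivity),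
      ← Real.rpow_mul hz.le, ← Real.exp_mul]
    congr 2
    · ring_nf
    · ring_nf
  rw [key]
  have he : ((L - 1) / 3 + 1) / 2 = (L + 2) / 6 := by ring
  rw [he]
  have cube1 : ((2 / c) ^ ((1 : ℝ) / 3)) ^ 3 = 2 / c := by
    rw [← Real.rpow_natCast ((2 / c) ^ ((1:ℝ)/3)) 3, ← Real.rpow_mul (by positivity)]
    norm_num
  have cube2 : (((1 : ℝ)/6) ^ (-((L - 1) / 3 + 1) / 2)) ^ 3 = 6 * 2 ^ (L/2) * 3 ^ (L/2) := by
    rw [← Real.rpow_natCast (((1:ℝ)/6) ^ (-((L - 1) / 3 + 1) / 2)) 3,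
      ← Real.rpow_mul (by norm_num)]
    have h3 : -((L - 1) / 3 + 1) / 2 * ((3:ℕ):ℝ) = -((L + 2) / 2) := by push_cast; ring
    rw [h3, show (1:ℝ)/6 = (6:ℝ)⁻¹ by norm_num, Real.inv_rpow (by norm_num),
      ← Real.rpow_neg (by norm_num), neg_neg,
      show (L + 2)/2 = L/2 + 1 by ring, Real.rpow_add (by norm_num), Real.rpow_one,
      show (6:ℝ) = 2 * 3 by norm_num, Real.mul_rpow (by norm_num) (by norm_num)]
    ring
  rw [mul_pow, cube1, mul_pow, mul_pow, cube2, hc]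
  have h2 : (0:ℝ) < (2:ℝ) ^ (L/2) := by positivity
  field_simp
  ring
end

section
/- Let E be a real Hilbert space and F : E → ℝ a differentiable function whose gradient ∇F is β-Lipschitz for some β > 0 (so F(y) − F(x) ≤ ⟨∇F(x), y − x⟩ + (β/2)‖y − x‖² for all x, y). Let x, w̃, e ∈ E and η, δ, ε ≥ 0 satisfy ‖e‖² ≤ δ·‖∇F(x)‖² and ‖∇F(x)‖ ≤ ε. Then F( w̃ − η·(∇F(x) − e) ) − F(w̃) ≤ −(η·(1 − δ − 2ηβδ)/2)·‖∇F(x)‖² + (η·β²/2)·‖w̃ − x‖² + η²·β·ε². (The per-round descent inequality (A.13)–(A.14) in the proof of Theorem 3, in deterministic form: one step of the virtual sequence driven by the gradient at the true iterate x, corrupted by a relatively bounded reconstruction error e, decreases the loss up to terms controlled by the iterate mismatch ‖w̃ − x‖² and the gradient bound ε.) -/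
open RealInnerProductSpace

set_option maxHeartbeats 1000000

theorem stmt_15 {E : Type*} [NormedAddCommGroup E] [InnerProductSpace ℝ E] [CompleteSpace E]
    (F : E → ℝ) (β : ℝ) (hβ : 0 < β)
    (hdiff : Differentiable ℝ F)
    (hlip : ∀ x y, ‖gradient F x - gradient F y‖ ≤ β * ‖x - y‖)
    (hsmooth : ∀ x y, F y - F x ≤ ⟪gradient F x, y - x⟫ + β / 2 * ‖y - x‖ ^ 2)
    (x wt e : E) (η δ ε : ℝ) (hη : 0 ≤ η) (hδ : 0 ≤ δ) (hε : 0 ≤ ε)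
    (he : ‖e‖ ^ 2 ≤ δ * ‖gradient F x‖ ^ 2)
    (hg : ‖gradient F x‖ ≤ ε) :
    F (wt - η • (gradient F x - e)) - F wt ≤
      -(η * (1 - δ - 2 * η * β * δ) / 2) * ‖gradient F x‖ ^ 2
        + (η * β ^ 2 / 2) * ‖wt - x‖ ^ 2 + η ^ 2 * β * ε ^ 2 := by
  set g := gradient F x with hgdef
  set d := gradient F wt - g with hddef
  have h1 := hsmooth wt (wt - η • (g - e))
  have hsub : wt - η • (g - e) - wt = -(η • (g - e)) := by abel
  rw [hsub] at h1
  have hinner : ⟪gradient F wt, -(η • (g - e))⟫ = -(η * ⟪g, g - e⟫) - η * ⟪d, g - e⟫ := by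
    have hw : gradient F wt = g + d := by rw [hddef]; abel
    rw [hw, inner_neg_right, inner_smul_right, inner_add_left]
    ring
  have hnorm : ‖-(η • (g - e))‖ ^ 2 = η ^ 2 * ‖g - e‖ ^ 2 := by
    rw [norm_neg, norm_smul, mul_pow, Real.norm_eq_abs, sq_abs]
  rw [hinner, hnorm] at h1
  -- polarization: ⟪g, g-e⟫ = (‖g‖² - ‖e‖² + ‖g-e‖²)/2
  have hpol : ⟪g, g - e⟫ = (‖g‖ ^ 2 - ‖e‖ ^ 2 + ‖g - e‖ ^ 2) / 2 := by
    have he' : e = g - (g - e) := by abel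
    have h2 : ‖g - (g - e)‖ ^ 2 = ‖g‖ ^ 2 - 2 * ⟪g, g - e⟫ + ‖g - e‖ ^ 2 :=
      @norm_sub_sq_real _ _ _ g (g - e)
    rw [← he'] at h2
    linarith
  rw [hpol] at h1
  -- bound the cross term
  have hd : ‖d‖ ≤ β * ‖wt - x‖ := hlip wt x
  have hcs : -(‖d‖ * ‖g - e‖) ≤ ⟪d, g - e⟫ := neg_le_of_abs_le (abs_real_inner_le_norm d (g - e))
  have hdn : 0 ≤ ‖d‖ := norm_nonneg d
  have hgen : 0 ≤ ‖g - e‖ := norm_nonneg (g - e)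
  have hwn : 0 ≤ ‖wt - x‖ := norm_nonneg (wt - x)
  have hcross : ‖d‖ * ‖g - e‖ ≤ (β ^ 2 * ‖wt - x‖ ^ 2 + ‖g - e‖ ^ 2) / 2 := by
    nlinarith [sq_nonneg (‖d‖ - ‖g - e‖),
      mul_le_mul hd hd hdn (by positivity : (0:ℝ) ≤ β * ‖wt - x‖)]
  have hId : -(η * ⟪d, g - e⟫) ≤ η * ((β ^ 2 * ‖wt - x‖ ^ 2 + ‖g - e‖ ^ 2) / 2) := by
    have h3 : -(⟪d, g - e⟫) ≤ (β ^ 2 * ‖wt - x‖ ^ 2 + ‖g - e‖ ^ 2) / 2 := by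
      linarith [hcs, hcross]
    calc -(η * ⟪d, g - e⟫) = η * (-(⟪d, g - e⟫)) := by ring
      _ ≤ η * ((β ^ 2 * ‖wt - x‖ ^ 2 + ‖g - e‖ ^ 2) / 2) :=
          mul_le_mul_of_nonneg_left h3 hη
  -- remaining product bounds
  have hE : η / 2 * ‖e‖ ^ 2 ≤ η / 2 * (δ * ‖g‖ ^ 2) :=
    mul_le_mul_of_nonneg_left he (by positivity)
  have hge2 : ‖g - e‖ ^ 2 ≤ 2 * ‖g‖ ^ 2 + 2 * ‖e‖ ^ 2 := by
    have h := norm_sub_le g e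
    nlinarith [sq_nonneg (‖g‖ - ‖e‖), norm_nonneg g, norm_nonneg e, norm_nonneg (g - e),
      mul_le_mul h h (norm_nonneg (g - e)) (by positivity : (0:ℝ) ≤ ‖g‖ + ‖e‖)]
  have hS : β * η ^ 2 / 2 * ‖g - e‖ ^ 2 ≤ β * η ^ 2 / 2 * (2 * ‖g‖ ^ 2 + 2 * ‖e‖ ^ 2) :=
    mul_le_mul_of_nonneg_left hge2 (by positivity)
  have hE2 : β * η ^ 2 * ‖e‖ ^ 2 ≤ β * η ^ 2 * (δ * ‖g‖ ^ 2) :=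
    mul_le_mul_of_nonneg_left he (by positivity)
  have hG2 : ‖g‖ ^ 2 ≤ ε ^ 2 := by nlinarith [norm_nonneg g]
  have hGe : β * η ^ 2 * ‖g‖ ^ 2 ≤ β * η ^ 2 * ε ^ 2 :=
    mul_le_mul_of_nonneg_left hG2 (by positivity)
  linarith [h1, hId, hE, hS, hE2, hGe]
end

section
/- Let E be a real Hilbert space and F : E → ℝ a differentiable function whose gradient ∇F is β-Lipschitz for some β > 0 (so F(y) − F(x) ≤ ⟨∇F(x), y − x⟩ + (β/2)‖y − x‖² for all x, y), and assume F(x) ≥ F* for all x ∈ E. Let T ≥ 1 be an integer, δ ∈ [0, 1), ε ≥ 0, κ ≥ 1, and set η := (1 − δ)/(2β(1 + δ)√T). Suppose sequences w, w̃ : {1, …, T+1} → E and e : {1, …, T} → E satisfy: w̃(1) = w(1); w̃(t+1) = w̃(t) − η·(∇F(w(t)) − e(t)); ‖e(t)‖² ≤ δ·‖∇F(w(t))‖²; ‖∇F(w(t))‖ ≤ ε; and ‖w̃(t) − w(t)‖² ≤ 4η²ε²(κ − 1)κ, for every t ∈ {1, …, T}. Then (1/T)·Σ_{t=1}^{T}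 ‖∇F(w(t))‖² ≤ (1/√T)·( 8β(1 + δ)·(F(w(1)) − F*)/(1 − δ)² + 2ε² ) + 2ε²(κ − 1)κ/T. (Theorem 3 of the paper in deterministic/pathwise form: FedVQCS with the SGD algorithm converges to a stationary point of a smooth loss at rate O(1/√T), where κ = N/S_min arises from the error-accumulation bound of top-S sparsification.) -/
set_option maxHeartbeats 1000000
open RealInnerProductSpace

lemma step_lemma {E : Type*} [NormedAddCommGroup E] [InnerProductSpace ℝ E] [CompleteSpace E]
    (F : E → ℝ) (β η μ δ : ℝ) (hβ : 0 < β) (hη : 0 ≤ η) (hμ : 0 < μ)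
    (hν : μ + β * η / 2 = 1 / 2)
    (x y z b : E)
    (hy : y = x - η • (gradient F z - b))
    (hsm : F y - F x ≤ ⟪gradient F x, y - x⟫ + β / 2 * ‖y - x‖ ^ 2)
    (hlip : ‖gradient F x - gradient F z‖ ≤ β * ‖x - z‖)
    (hb : ‖b‖ ^ 2 ≤ δ * ‖gradient F z‖ ^ 2) :
    F y ≤ F x - η * (1 - δ) / 2 * ‖gradient F z‖ ^ 2
        + η * β ^ 2 * ‖x - z‖ ^ 2 / (4 * μ) := by
  set a := gradient F z with ha
  set G := gradient F x with hG
  set v := a - b with hv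
  have hyx : y - x = -(η • v) := by rw [hy]; abel
  have hinner : ⟪G, y - x⟫ = -(η * ⟪G, v⟫) := by
    rw [hyx, inner_neg_right, real_inner_smul_right]
  have hnorm : ‖y - x‖ ^ 2 = η ^ 2 * ‖v‖ ^ 2 := by
    rw [hyx, norm_neg, norm_smul, Real.norm_eq_abs, mul_pow, sq_abs]
  have hsplit : ⟪G, v⟫ = ⟪a, v⟫ + ⟪G - a, v⟫ := by
    rw [inner_sub_left]; ring
  have habs : |⟪G - a, v⟫| ≤ ‖G - a‖ * ‖v‖ := abs_real_inner_le_norm _ _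
  have hcross : -(β * ‖x - z‖ * ‖v‖) ≤ ⟪G - a, v⟫ := by
    have h1 : -(‖G - a‖ * ‖v‖) ≤ ⟪G - a, v⟫ := neg_le_of_abs_le habs
    have h2 : ‖G - a‖ * ‖v‖ ≤ β * ‖x - z‖ * ‖v‖ :=
      mul_le_mul_of_nonneg_right hlip (norm_nonneg _)
    linarith
  have hyoung : β * ‖x - z‖ * ‖v‖ - μ * ‖v‖ ^ 2 ≤ β ^ 2 * ‖x - z‖ ^ 2 / (4 * μ) := by
    rw [le_div_iff₀ (by positivity)]
    nlinarith [sq_nonneg (2 * μ * ‖v‖ - β * ‖x - z‖)]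
  have hav : ⟪a, v⟫ = ‖a‖ ^ 2 - ⟪a, b⟫ := by
    rw [hv, inner_sub_right, real_inner_self_eq_norm_sq]
  have hv2 : ‖v‖ ^ 2 = ‖a‖ ^ 2 - 2 * ⟪a, b⟫ + ‖b‖ ^ 2 := by
    rw [hv]; exact norm_sub_sq_real a b
  -- combine
  have h1 : F y - F x ≤ η * (-⟪a, v⟫ + β * ‖x - z‖ * ‖v‖) + β / 2 * (η ^ 2 * ‖v‖ ^ 2) := by
    have hGv : -⟪G, v⟫ ≤ -⟪a, v⟫ + β * ‖x - z‖ * ‖v‖ := by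
      rw [hsplit]; linarith
    have hm := mul_le_mul_of_nonneg_left hGv hη
    have hsm' := hsm
    rw [hinner, hnorm] at hsm'
    linarith
  have h2 : -⟪a, v⟫ + β * ‖x - z‖ * ‖v‖
      ≤ -⟪a, v⟫ + μ * ‖v‖ ^ 2 + β ^ 2 * ‖x - z‖ ^ 2 / (4 * μ) := by linarith
  have h3 : -⟪a, v⟫ + (μ + β * η / 2) * ‖v‖ ^ 2 = (‖b‖ ^ 2 - ‖a‖ ^ 2) / 2 := by
    rw [hν, hav, hv2]; ring
  have h4 : (‖b‖ ^ 2 - ‖a‖ ^ 2) / 2 ≤ -((1 - δ) / 2) * ‖a‖ ^ 2 := by nlinarith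
  -- F y - F x ≤ η * ((‖b‖²-‖a‖²)/2) + η β² Δ²/(4μ)
  have h5 : F y - F x ≤ η * ((‖b‖ ^ 2 - ‖a‖ ^ 2) / 2) + η * (β ^ 2 * ‖x - z‖ ^ 2 / (4 * μ)) := by
    have e1 : η * (-⟪a, v⟫ + β * ‖x - z‖ * ‖v‖) + β / 2 * (η ^ 2 * ‖v‖ ^ 2)
        = η * (-⟪a, v⟫ + β * ‖x - z‖ * ‖v‖ + β * η / 2 * ‖v‖ ^ 2) := by ring
    have e2 : -⟪a, v⟫ + β * ‖x - z‖ * ‖v‖ + β * η / 2 * ‖v‖ ^ 2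
        ≤ (‖b‖ ^ 2 - ‖a‖ ^ 2) / 2 + β ^ 2 * ‖x - z‖ ^ 2 / (4 * μ) := by
      have : -⟪a, v⟫ + (μ + β * η / 2) * ‖v‖ ^ 2 ≤ (‖b‖ ^ 2 - ‖a‖ ^ 2) / 2 := le_of_eq h3
      linarith
    calc F y - F x ≤ η * (-⟪a, v⟫ + β * ‖x - z‖ * ‖v‖ + β * η / 2 * ‖v‖ ^ 2) := by
            rw [← e1]; exact h1
      _ ≤ η * ((‖b‖ ^ 2 - ‖a‖ ^ 2) / 2 + β ^ 2 * ‖x - z‖ ^ 2 / (4 * μ)) :=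
            mul_le_mul_of_nonneg_left e2 hη
      _ = _ := by ring
  have h6 : η * ((‖b‖ ^ 2 - ‖a‖ ^ 2) / 2) ≤ η * (-((1 - δ) / 2) * ‖a‖ ^ 2) :=
    mul_le_mul_of_nonneg_left h4 hη
  have : F y - F x ≤ -(η * (1 - δ) / 2) * ‖a‖ ^ 2 + η * β ^ 2 * ‖x - z‖ ^ 2 / (4 * μ) := by
    calc F y - F x ≤ η * (-((1 - δ) / 2) * ‖a‖ ^ 2) + η * (β ^ 2 * ‖x - z‖ ^ 2 / (4 * μ)) := by
          linarith
      _ = -(η * (1 - δ) / 2) * ‖a‖ ^ 2 + η * β ^ 2 * ‖x - z‖ ^ 2 / (4 * μ) := by ring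
  linarith
theorem stmt_16 {E : Type*} [NormedAddCommGroup E] [InnerProductSpace ℝ E] [CompleteSpace E]
    (F : E → ℝ) (β Fstar : ℝ) (hβ : 0 < β)
    (hdiff : Differentiable ℝ F)
    (hlip : ∀ x y, ‖gradient F x - gradient F y‖ ≤ β * ‖x - y‖)
    (hsmooth : ∀ x y, F y - F x ≤ ⟪gradient F x, y - x⟫ + β / 2 * ‖y - x‖ ^ 2)
    (hlb : ∀ x, Fstar ≤ F x)
    (T : ℕ) (hT : 1 ≤ T)
    (δ ε κ : ℝ) (hδ0 : 0 ≤ δ) (hδ1 : δ < 1) (hε : 0 ≤ ε) (hκ : 1 ≤ κ)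
    (η : ℝ) (hη : η = (1 - δ) / (2 * β * (1 + δ) * Real.sqrt T))
    (w wt : ℕ → E) (e : ℕ → E)
    (hinit : wt 1 = w 1)
    (hrec : ∀ t, 1 ≤ t → t ≤ T → wt (t + 1) = wt t - η • (gradient F (w t) - e t))
    (he : ∀ t, 1 ≤ t → t ≤ T → ‖e t‖ ^ 2 ≤ δ * ‖gradient F (w t)‖ ^ 2)
    (hg : ∀ t, 1 ≤ t → t ≤ T → ‖gradient F (w t)‖ ≤ ε)
    (hdev : ∀ t, 1 ≤ t → t ≤ T → ‖wt t - w t‖ ^ 2 ≤ 4 * η ^ 2 * ε ^ 2 * (κ - 1) * κ) :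
    (1 / (T : ℝ)) * ∑ t ∈ Finset.Icc 1 T, ‖gradient F (w t)‖ ^ 2 ≤
      (1 / Real.sqrt T) *
          (8 * β * (1 + δ) * (F (w 1) - Fstar) / (1 - δ) ^ 2 + 2 * ε ^ 2)
        + 2 * ε ^ 2 * (κ - 1) * κ / T := by
  have hT0 : (0:ℝ) < T := by exact_mod_cast Nat.lt_of_lt_of_le Nat.zero_lt_one hT
  have hs1 : 1 ≤ Real.sqrt T := by
    rw [show (1:ℝ) = Real.sqrt 1 from Real.sqrt_one.symm]
    exact Real.sqrt_le_sqrt (by exact_mod_cast hT)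
  set s := Real.sqrt (T:ℝ) with hsdef
  have hs0 : 0 < s := by linarith
  have hsT : s ^ 2 = (T:ℝ) := Real.sq_sqrt hT0.le
  have h1δ : 0 < 1 - δ := by linarith
  have h1δ' : 0 < 1 + δ := by linarith
  have hden : 0 < 2 * β * (1 + δ) * s := by
    have := mul_pos (mul_pos (mul_pos two_pos hβ) h1δ') hs0
    linarith [this]
  have hη0 : 0 < η := by rw [hη]; exact div_pos h1δ hden
  have hβη : β * η = (1 - δ) / (2 * (1 + δ) * s) := by
    rw [hη]
    field_simp
  have hβηle : β * η ≤ 1 / 2 := by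
    rw [hβη, div_le_div_iff₀ (by nlinarith) two_pos]
    nlinarith
  set μ := (1 - β * η) / 2 with hμdef
  have hμ4 : 1 / 4 ≤ μ := by rw [hμdef]; linarith
  have hμ0 : 0 < μ := by linarith
  have hν : μ + β * η / 2 = 1 / 2 := by rw [hμdef]; ring
  set K := (κ - 1) * κ with hK
  have hK0 : 0 ≤ K := by rw [hK]; nlinarith
  set C := η * β ^ 2 * (4 * η ^ 2 * ε ^ 2 * K) / (4 * μ) with hC
  have hC0 : 0 ≤ C := by
    rw [hC]
    apply div_nonneg _ (by linarith : (0:ℝ) ≤ 4 * μ)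
    exact mul_nonneg (mul_nonneg hη0.le (sq_nonneg β))
      (mul_nonneg (by positivity) hK0)
  have key : ∀ n, n ≤ T →
      F (wt (n + 1)) + η * (1 - δ) / 2 * ∑ t ∈ Finset.Icc 1 n, ‖gradient F (w t)‖ ^ 2
        ≤ F (w 1) + n * C := by
    intro n
    induction n with
    | zero => intro _; simp [hinit]
    | succ n ih =>
      intro hn1
      have hn : n ≤ T := Nat.le_of_succ_le hn1
      have h1 : 1 ≤ n + 1 := Nat.succ_le_succ (Nat.zero_le n)
      have hstep := step_lemma F β η μ δ hβ hη0.le hμ0 hν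
        (wt (n + 1)) (wt (n + 1 + 1)) (w (n + 1)) (e (n + 1))
        (hrec (n + 1) h1 hn1) (hsmooth _ _) (hlip _ _) (he (n + 1) h1 hn1)
      have hd : η * β ^ 2 * ‖wt (n + 1) - w (n + 1)‖ ^ 2 / (4 * μ) ≤ C := by
        rw [hC]
        apply div_le_div_of_nonneg_right _ (by linarith : (0:ℝ) ≤ 4 * μ)
        have hdv : ‖wt (n + 1) - w (n + 1)‖ ^ 2 ≤ 4 * η ^ 2 * ε ^ 2 * K := by
          rw [hK]; linarith [hdev (n + 1) h1 hn1]
        exact mul_le_mul_of_nonneg_left hdv (mul_nonneg hη0.le (sq_nonneg β))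
      have hsum : ∑ t ∈ Finset.Icc 1 (n + 1), ‖gradient F (w t)‖ ^ 2
          = (∑ t ∈ Finset.Icc 1 n, ‖gradient F (w t)‖ ^ 2) + ‖gradient F (w (n + 1))‖ ^ 2 :=
        Finset.sum_Icc_succ_top h1 _
      have ihn := ih hn
      rw [hsum]
      push_cast
      have hcoef : 0 ≤ η * (1 - δ) / 2 := by positivity
      linarith
  have hfin := key T le_rfl
  have hlbT := hlb (wt (T + 1))
  have hlb1 := hlb (w 1)
  set S := ∑ t ∈ Finset.Icc 1 T, ‖gradient F (w t)‖ ^ 2 with hS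
  have hS0 : 0 ≤ S := Finset.sum_nonneg fun i _ => sq_nonneg _
  set D := F (w 1) - Fstar with hD
  have hD0 : 0 ≤ D := by rw [hD]; linarith
  have hmain : η * (1 - δ) / 2 * S ≤ D + T * C := by rw [hD]; linarith
  have hcoefpos : 0 < η * (1 - δ) / 2 := by positivity
  -- bound T*C
  have h2 : (T:ℝ) * C ≤ η * (1 - δ) * ε ^ 2 * K := by
    have e1 : (T:ℝ) * C = s ^ 2 * (β * η) ^ 2 * (η * ε ^ 2 * K / μ) := by
      rw [hC, ← hsT]; field_simp
    have e2 : s ^ 2 * (β * η) ^ 2 = (1 - δ) ^ 2 / (4 * (1 + δ) ^ 2) := by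
      rw [hβη]; field_simp; ring
    have e3 : (1 - δ) ^ 2 / (4 * (1 + δ) ^ 2) ≤ μ * (1 - δ) := by
      rw [div_le_iff₀ (by nlinarith : (0:ℝ) < 4 * (1 + δ) ^ 2)]
      have ha : (1 - δ) ^ 2 ≤ (1 - δ) * (1 + δ) ^ 2 := by
        nlinarith [mul_nonneg h1δ.le hδ0, mul_nonneg (mul_nonneg h1δ.le hδ0) hδ0]
      have hb2 : (1 - δ) * (1 + δ) ^ 2 ≤ μ * (1 - δ) * (4 * (1 + δ) ^ 2) := by
        nlinarith [mul_nonneg (by linarith : (0:ℝ) ≤ 4 * μ - 1)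
          (mul_nonneg h1δ.le (sq_nonneg (1 + δ)))]
      linarith
    have e4 : 0 ≤ η * ε ^ 2 * K / μ := by positivity
    calc (T:ℝ) * C = s ^ 2 * (β * η) ^ 2 * (η * ε ^ 2 * K / μ) := e1
      _ ≤ μ * (1 - δ) * (η * ε ^ 2 * K / μ) := by
          apply mul_le_mul_of_nonneg_right _ e4
          rw [e2]; exact e3
      _ = η * (1 - δ) * ε ^ 2 * K := by field_simp
  -- the target RHS times coefficient
  rw [one_div, inv_mul_le_iff₀ hT0]
  have hx : η * (1 - δ) / 2 *
      ((T:ℝ) * ((1 / s) * (8 * β * (1 + δ) * D / (1 - δ) ^ 2 + 2 * ε ^ 2)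
        + 2 * ε ^ 2 * (κ - 1) * κ / T))
      = 2 * D + η * (1 - δ) * s * ε ^ 2 + η * (1 - δ) * ε ^ 2 * K := by
    rw [hK, hη, ← hsT]
    field_simp
    ring
  have hRT : D + (T:ℝ) * C ≤ η * (1 - δ) / 2 *
      ((T:ℝ) * ((1 / s) * (8 * β * (1 + δ) * D / (1 - δ) ^ 2 + 2 * ε ^ 2)
        + 2 * ε ^ 2 * (κ - 1) * κ / T)) := by
    rw [hx]
    have : 0 ≤ η * (1 - δ) * s * ε ^ 2 := by positivity
    linarith
  have hfinal : η * (1 - δ) / 2 * S ≤ η * (1 - δ) / 2 *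
      ((T:ℝ) * ((1 / s) * (8 * β * (1 + δ) * D / (1 - δ) ^ 2 + 2 * ε ^ 2)
        + 2 * ε ^ 2 * (κ - 1) * κ / T)) := hmain.trans hRT
  exact le_of_mul_le_mul_left hfinal hcoefpos
end
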